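/- Let L₋₁ = αβᵗ, L'₋₁ = αβ'ᵗ with βᵗα = β'ᵗα = 0, and let L₀, L'₀ be matrices with L₀α = κα and L'₀α = κ'α. Then the matrix M = [L₋₁, L'₀] + [L₀, L'₋₁] is of the form αγᵗ for some γ ∈ ℂⁿ with γᵗα = 0. -/
import Mathlib


/-- With L₋₁ = αβᵗ, L'₋₁ = αβ'ᵗ, βᵗα = β'ᵗα = 0, L₀α = κα, L'₀α = κ'α, the matrix
[L₋₁, L'₀] + [L₀, L'₋₁] equals αγᵗ for some γ with γᵗα = 0. -/
theorem stmt_3 (n : ℕ) (α β β' : Fin n → ℂ) (L₀ L₀' : Matrix (Fin n) (Fin n) ℂ) (κ κ' : ℂ)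
    (hβ : ∑ i, β i * α i = 0) (hβ' : ∑ i, β' i * α i = 0)
    (h₀ : L₀.mulVec α = κ • α) (h₀' : L₀'.mulVec α = κ' • α) :
    ∃ γ : Fin n → ℂ,
      ⁅Matrix.vecMulVec α β, L₀'⁆ + ⁅L₀, Matrix.vecMulVec α β'⁆ = Matrix.vecMulVec α γ
      ∧ ∑ i, γ i * α i = 0 := by
  refine ⟨fun j => (Matrix.vecMul β L₀') j - κ' * β j + κ * β' j - (Matrix.vecMul β' L₀) j,
    ?_, ?_⟩
  · ext i j
    have h1 : (L₀'.mulVec α) i = κ' * α i := by rw [h₀']; simp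
    have h2 : (L₀.mulVec α) i = κ * α i := by rw [h₀]; simp
    simp only [Ring.lie_def, Matrix.add_apply, Matrix.sub_apply, Matrix.mul_apply,
      Matrix.vecMulVec_apply, Matrix.vecMul, Matrix.mulVec, dotProduct] at *
    rw [show (∑ k, α i * β k * L₀' k j) = α i * ∑ k, β k * L₀' k j by
      rw [Finset.mul_sum]; congr 1; ext k; ring]
    rw [show (∑ k, L₀' i k * (α k * β j)) = (∑ k, L₀' i k * α k) * β j by
      rw [Finset.sum_mul]; congr 1; ext k; ring]
    rw [show (∑ k, L₀ i k * (α k * β' j)) = (∑ k, L₀ i k * α k) * β' j by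
      rw [Finset.sum_mul]; congr 1; ext k; ring]
    rw [show (∑ k, α i * β' k * L₀ k j) = α i * ∑ k, β' k * L₀ k j by
      rw [Finset.mul_sum]; congr 1; ext k; ring]
    rw [h1, h2]
    ring
  · have key : ∀ (M : Matrix (Fin n) (Fin n) ℂ) (v : Fin n → ℂ),
        ∑ j, (Matrix.vecMul v M) j * α j = ∑ k, v k * (M.mulVec α) k := by
      intro M v
      simp only [Matrix.vecMul, Matrix.mulVec, dotProduct, Finset.sum_mul,
        Finset.mul_sum]
      rw [Finset.sum_comm]
      congr 1; ext j; congr 1; ext k; ring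
    simp only [sub_mul, add_mul, Finset.sum_sub_distrib, Finset.sum_add_distrib,
      key, h₀, h₀']
    simp only [Pi.smul_apply, smul_eq_mul]
    rw [show (∑ k, β k * (κ' * α k)) = κ' * ∑ k, β k * α k by
      rw [Finset.mul_sum]; congr 1; ext k; ring]
    rw [show (∑ k, β' k * (κ * α k)) = κ * ∑ k, β' k * α k by
      rw [Finset.mul_sum]; congr 1; ext k; ring]
    rw [show (∑ i, κ' * β i * α i) = κ' * ∑ i, β i * α i by
      rw [Finset.mul_sum]; congr 1; ext k; ring]
    rw [show (∑ i, κ * β' i * α i) = κ * ∑ i, β' i * α i by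
      rw [Finset.mul_sum]; congr 1; ext k; ring]
    rw [hβ, hβ']; ring
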